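/- Let a > 0 and n ≥ 2 be a natural number, and define the multilayer squared loss MLSq_{a,n}(z) = (zⁿ − a)². Then the product-stability of MLSq_{a,n} at its minimum z* = a^{1/n} is strictly positive: α_{MLSq_{a,n}}(a^{1/n}) = 3(MLSq_{a,n}'''(z*))² − MLSq_{a,n}''''(z*)·MLSq_{a,n}''(z*) > 0. -/

import Mathlib

/-- The multilayer squared loss `MLSq_{a,n}(z) = (zⁿ − a)²`. -/
noncomputable def MLSq (a : ℝ) (n : ℕ) (z : ℝ) : ℝ := (z ^ n - a) ^ 2

lemma iter_deriv_mlsq (a : ℝ) (n : ℕ) (hn : 1 ≤ n) : ∀ k, 1 ≤ k →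
    iteratedDeriv k (MLSq a n) = fun z => ((2 * n).descFactorial k : ℝ) * z ^ (2 * n - k)
      - 2 * a * ((n.descFactorial k : ℝ) * z ^ (n - k)) := by
  intro k hk
  induction k with
  | zero => omega
  | succ k IH =>
    rcases Nat.eq_or_lt_of_le hk with h1 | h1
    · have hk0 : k = 0 := by omega
      subst hk0
      funext z
      rw [iteratedDeriv_one]
      have h : HasDerivAt (MLSq a n) (2 * (z ^ n - a) ^ 1 * (n * z ^ (n - 1))) z :=
        ((hasDerivAt_pow n z).sub_const a).pow 2
      rw [h.deriv]
      have h2 : 2 * n - 1 = n + (n - 1) := by omega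
      simp [Nat.descFactorial, h2, pow_add]
      ring
    · have hk1 : 1 ≤ k := by omega
      rw [iteratedDeriv_succ, IH hk1]
      funext z
      have h1 : HasDerivAt (fun z : ℝ => ((2 * n).descFactorial k : ℝ) * z ^ (2 * n - k))
          (((2 * n).descFactorial k : ℝ) * (((2 * n - k : ℕ) : ℝ) * z ^ (2 * n - k - 1))) z :=
        (hasDerivAt_pow (2 * n - k) z).const_mul _
      have h2 : HasDerivAt (fun z : ℝ => 2 * a * ((n.descFactorial k : ℝ) * z ^ (n - k)))
          (2 * a * ((n.descFactorial k : ℝ) * (((n - k : ℕ) : ℝ) * z ^ (n - k - 1)))) z :=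
        ((hasDerivAt_pow (n - k) z).const_mul _).const_mul _
      rw [(show HasDerivAt (fun z : ℝ => ((2 * n).descFactorial k : ℝ) * z ^ (2 * n - k) - 2 * a * ((n.descFactorial k : ℝ) * z ^ (n - k))) _ z from h1.sub h2).deriv]
      rw [Nat.descFactorial_succ, Nat.descFactorial_succ, Nat.sub_sub, Nat.sub_sub]
      push_cast
      ring

/-- For `a > 0` and `n ≥ 2`, the multilayer squared loss is product-stable
at its minimum `z* = a^{1/n}`. -/
theorem mlsq_product_stable (a : ℝ) (ha : 0 < a) (n : ℕ) (hn : 2 ≤ n) :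
    0 < 3 * (iteratedDeriv 3 (MLSq a n) (a ^ ((1 : ℝ) / n))) ^ 2 -
        iteratedDeriv 4 (MLSq a n) (a ^ ((1 : ℝ) / n)) *
          iteratedDeriv 2 (MLSq a n) (a ^ ((1 : ℝ) / n)) := by
  have hn1 : 1 ≤ n := by omega
  set c : ℝ := a ^ ((1 : ℝ) / n) with hcdef
  have hc : 0 < c := Real.rpow_pos_of_pos ha _
  have hn0 : (n : ℝ) ≠ 0 := Nat.cast_ne_zero.mpr (by omega)
  have hcn : c ^ n = a := by
    rw [hcdef, ← Real.rpow_natCast (a ^ ((1 : ℝ) / n)) n, ← Real.rpow_mul ha.le,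
      one_div_mul_cancel hn0, Real.rpow_one]
  rw [iter_deriv_mlsq a n hn1 2 (by norm_num), iter_deriv_mlsq a n hn1 3 (by norm_num),
    iter_deriv_mlsq a n hn1 4 (by norm_num)]
  simp only
  rw [← hcn]
  rcases (by omega : n = 2 ∨ n = 3 ∨ 4 ≤ n) with h | h | h4
  · subst h
    norm_num [Nat.descFactorial]
    nlinarith [pow_pos hc 2, sq_nonneg c]
  · subst h
    norm_num [Nat.descFactorial]
    nlinarith [pow_pos hc 6, pow_pos hc 3]
  · obtain ⟨m, h⟩ : ∃ m, n = m + 4 := ⟨n - 4, by omega⟩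
    subst h
    simp only [Nat.descFactorial,
      show 2 * (m + 4) - 1 = 2 * m + 7 from by omega,
      show 2 * (m + 4) - 2 = 2 * m + 6 from by omega,
      show 2 * (m + 4) - 3 = 2 * m + 5 from by omega,
      show 2 * (m + 4) - 4 = 2 * m + 4 from by omega,
      show m + 4 - 1 = m + 3 from by omega,
      show m + 4 - 2 = m + 2 from by omega,
      show m + 4 - 3 = m + 1 from by omega,
      show m + 4 - 4 = m from by omega,
      show 2 * (m + 4) - 0 = 2 * m + 8 from by omega,
      show m + 4 - 0 = m + 4 from by omega]
    have p1 : c ^ (2 * m + 4) = (c ^ m) ^ 2 * c ^ 4 := by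
      rw [show 2 * m + 4 = m * 2 + 4 from by ring, pow_add, pow_mul]
    have p2 : c ^ (2 * m + 5) = (c ^ m) ^ 2 * c ^ 5 := by
      rw [show 2 * m + 5 = m * 2 + 5 from by ring, pow_add, pow_mul]
    have p3 : c ^ (2 * m + 6) = (c ^ m) ^ 2 * c ^ 6 := by
      rw [show 2 * m + 6 = m * 2 + 6 from by ring, pow_add, pow_mul]
    have p4 : c ^ (m + 4) = c ^ m * c ^ 4 := by rw [pow_add]
    have p5 : c ^ (m + 2) = c ^ m * c ^ 2 := by rw [pow_add]
    have p6 : c ^ (m + 1) = c ^ m * c ^ 1 := by rw [pow_add]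
    rw [p1, p2, p3, p4, p5, p6]
    have hu : 0 < c ^ m := pow_pos hc m
    set u : ℝ := c ^ m with hu_def
    refine lt_of_lt_of_eq (b := c ^ 10 * u ^ 4 * (16 * ((m : ℝ) + 4) ^ 4 * ((m : ℝ) + 3) * (5 * (m : ℝ) + 16))) (by positivity) ?_
    push_cast
    ring
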